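/- Let (W,S) be a dihedral Coxeter system (|S| = 2), x ∈ W and t ∈ T with ℓ(t x) > ℓ(x) + 1. Then there exist t_1, …, t_n ∈ T with ℓ(t_i) < ℓ(t) for all i ∈ {1, …, n} and ℓ(x) < ℓ(t_1 x) < ℓ(t_2 t_1 x) < ⋯ < ℓ(t_n ⋯ t_1 x), with t_n ⋯ t_1 x = t x. -/

import Mathlib

/-!
Formalization of definitions from "orders on Coxeter groups associated with sets of
reflections" (k-intermediate orders, k-Bruhat graphs, k-absolute orders).

All definitions are parametrized by a length function `len : W → ℕ` and a set of
"reflections"; they are instantiated either with a `CoxeterSystem` (`cs.length` and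
`cs.IsReflection`) or concretely with the symmetric group `Equiv.Perm (Fin n)`
(inversion number and transpositions).
-/

namespace KBruhatPaper

variable {W : Type*} [Group W]

/-- One step in the directed graph associated with `len` and the set `X ⊆ T`:
`v` is obtained from `u` by multiplying on the left by an element `t ∈ X`,
with `len u < len v`. -/
def Step (len : W → ℕ) (X : Set W) (u v : W) : Prop :=
  ∃ t ∈ X, v = t * u ∧ len u < len v

/-- The partial order `≤_{L^X}`: `u ≤_{L^X} v` iff `u = v` or there are
`t₁, …, t_r ∈ X` with `len u < len (t₁ u) < ⋯ < len (t_r ⋯ t₁ u)` and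
`t_r ⋯ t₁ u = v`.  For `X = T` (all reflections) this is the Bruhat order. -/
def leL (len : W → ℕ) (X : Set W) : W → W → Prop :=
  Relation.ReflTransGen (Step len X)

/-- The strict order `<_{L^X}`. -/
def ltL (len : W → ℕ) (X : Set W) (u v : W) : Prop :=
  leL len X u v ∧ u ≠ v

/-- The covering relation of the poset `(W, ≤_{L^X})`. -/
def CovL (len : W → ℕ) (X : Set W) (u v : W) : Prop :=
  ltL len X u v ∧ ¬∃ w, ltL len X u w ∧ ltL len X w v

/-- `N(v) = {t ∈ T : len (t * v) < len v}`. -/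
def NSet (len : W → ℕ) (T : Set W) (v : W) : Set W :=
  {t ∈ T | len (t * v) < len v}

/-- A reflection subgroup: a subgroup generated by a subset of `T`. -/
def IsReflSubgroup (T : Set W) (W' : Subgroup W) : Prop :=
  ∃ A ⊆ T, W' = Subgroup.closure A

/-- The canonical Coxeter generators `S' = {t ∈ T : N(t) ∩ W' = {t}}` of a
reflection subgroup `W'`. -/
def CanGens (len : W → ℕ) (T : Set W) (W' : Subgroup W) : Set W :=
  {t ∈ T | NSet len T t ∩ (W' : Set W) = {t}}

/-- The relation `⊑'` on `T`: `t ⊑' t'` iff `t = t'` or there is a dihedral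
reflection subgroup `W'` (i.e. with exactly two canonical generators) containing
`t` and `t'`, together with a directed path from `t` to `t'` in the Bruhat graph
restricted to `W'`. -/
def SqLe' (len : W → ℕ) (T : Set W) (t t' : W) : Prop :=
  t = t' ∨ ∃ W' : Subgroup W, IsReflSubgroup T W' ∧ t ∈ W' ∧ t' ∈ W' ∧
    (CanGens len T W').encard = 2 ∧
    ∃ (n : ℕ) (x : ℕ → W), x 0 = t ∧ x n = t' ∧ (∀ i ≤ n, x i ∈ W') ∧
      ∀ i < n, x i * (x (i + 1))⁻¹ ∈ T ∧ ltL len T (x i) (x (i + 1))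

/-- The relation `⊑` on `T`: the transitive closure of `⊑'`. -/
def SqLe (len : W → ℕ) (T : Set W) : W → W → Prop :=
  Relation.TransGen (SqLe' len T)

/-- `X ⊆ T` is an order ideal of `(T, ⊑)`. -/
def IsIdeal (len : W → ℕ) (T : Set W) (X : Set W) : Prop :=
  X ⊆ T ∧ ∀ t t', SqLe len T t t' → t' ∈ X → t ∈ X

/-- `PFactor len J w wup wJ` expresses that `w = w^J ⬝ w_J` is the (unique) parabolic
factorization of `w` with respect to the set `J` of simple reflections:
`wup = w^J = P^J(w)` and `wJ = w_J ∈ W_J`. -/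
def PFactor (len : W → ℕ) (J : Set W) (w wup wJ : W) : Prop :=
  wJ ∈ Subgroup.closure J ∧ (∀ s ∈ J, len wup < len (wup * s)) ∧
    w = wup * wJ ∧ len w = len wup + len wJ

/-- `QFactor len J w wJ wq` expresses that `w = w'_J ⬝ (ᴶw)` is the (unique) parabolic
factorization of `w` with respect to the set `J` of simple reflections:
`wJ = w'_J ∈ W_J` and `wq = ᴶw = Q^J(w)`. -/
def QFactor (len : W → ℕ) (J : Set W) (w wJ wq : W) : Prop :=
  wJ ∈ Subgroup.closure J ∧ (∀ s ∈ J, len wq < len (s * wq)) ∧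
    w = wJ * wq ∧ len w = len wJ + len wq

/-- A chain `e = x₀ → x₁ → ⋯ → x_r = w` of `r` steps in the directed graph with
steps from `X` (for `X = T_k`, a path from `e` to `w` in the `k`-Bruhat graph). -/
def ChainOfLen (len : W → ℕ) (X : Set W) (w : W) (r : ℕ) : Prop :=
  ∃ x : ℕ → W, x 0 = 1 ∧ x r = w ∧ ∀ i < r, Step len X (x i) (x (i + 1))

/-- `HasAbsLen len X w r` : `r` is the `X`-absolute length of `w`, i.e. the least
number of steps from `X` needed to reach `w` from the identity (for `X = T_k`,
the distance from `e` to `w` in the `k`-Bruhat graph, `ℓ_k(w)`). -/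
def HasAbsLen (len : W → ℕ) (X : Set W) (w : W) (r : ℕ) : Prop :=
  IsLeast {r | ChainOfLen len X w r} r

section CoxeterSystem

variable {B : Type*} {M : CoxeterMatrix B}

/-- The set `T` of reflections of a Coxeter system. -/
def TSet (cs : CoxeterSystem M W) : Set W := {t | cs.IsReflection t}

/-- The set `T_k = {t ∈ T : ℓ(t) ≤ 2k + 1}`. -/
def TkSet (cs : CoxeterSystem M W) (k : ℕ) : Set W :=
  {t | cs.IsReflection t ∧ cs.length t ≤ 2 * k + 1}

/-- The `k`-intermediate order `≤_{L^k}` on `W`. -/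
def leLk (cs : CoxeterSystem M W) (k : ℕ) : W → W → Prop :=
  leL cs.length (TkSet cs k)

/-- The strict `k`-intermediate order `<_{L^k}` on `W`. -/
def ltLk (cs : CoxeterSystem M W) (k : ℕ) : W → W → Prop :=
  ltL cs.length (TkSet cs k)

/-- The Bruhat order on `W`. -/
def bruhatLE (cs : CoxeterSystem M W) : W → W → Prop :=
  leL cs.length (TSet cs)

/-- The strict Bruhat order on `W`. -/
def bruhatLT (cs : CoxeterSystem M W) : W → W → Prop :=
  ltL cs.length (TSet cs)

end CoxeterSystem

section SymmetricGroup

/-- The number of inversions of a permutation of `Fin n`; this is the Coxeter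
length of the permutation with respect to the standard Coxeter presentation
of the symmetric group. -/
def invCount {n : ℕ} (w : Equiv.Perm (Fin n)) : ℕ :=
  (Finset.univ.filter fun p : Fin n × Fin n => p.1 < p.2 ∧ w p.2 < w p.1).card

/-- The set of transpositions: the reflections of the symmetric group. -/
def swaps (n : ℕ) : Set (Equiv.Perm (Fin n)) := {σ | σ.IsSwap}

/-- The set of simple transpositions `s_i = (i, i+1)`: the standard Coxeter
generators of the symmetric group. -/
def simples (n : ℕ) : Set (Equiv.Perm (Fin n)) :=
  {σ | ∃ i j : Fin n, (i : ℕ) + 1 = (j : ℕ) ∧ σ = Equiv.swap i j}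

/-- The set `T_k` for the symmetric group: transpositions of length at most `2k + 1`. -/
def swapsK (n k : ℕ) : Set (Equiv.Perm (Fin n)) :=
  {σ | σ.IsSwap ∧ invCount σ ≤ 2 * k + 1}

end SymmetricGroup

end KBruhatPaper

open KBruhatPaper
open CoxeterSystem List



section Stmt12Aux
open CoxeterSystem List

section Lists
variable {B : Type*}

theorem alt_drop (i i' : B) : ∀ (N j : ℕ), j ≤ N →
    (alternatingWord i i' N).drop (N - j) = alternatingWord i i' j := by
  intro N
  induction N with
  | zero => intro j hj; interval_cases j; simp
  | succ N ih =>
    intro j hj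
    rcases eq_or_lt_of_le hj with rfl | hj'
    · simp
    · rw [alternatingWord_succ', show N + 1 - j = (N - j) + 1 by omega, List.drop_succ_cons]
      exact ih j (by omega)

theorem alt_append (i i' : B) : ∀ (K m : ℕ),
    alternatingWord i i' (K + m) =
      alternatingWord (if Even m then i else i') (if Even m then i' else i) K
        ++ alternatingWord i i' m := by
  intro K
  induction K with
  | zero => intro m; simp [alternatingWord]
  | succ K ih =>
    intro m
    rw [show K + 1 + m = (K + m) + 1 by omega, alternatingWord_succ', ih m,
      alternatingWord_succ']
    rw [List.cons_append]
    congr 1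
    have h1 : Even (K + m) ↔ (Even K ↔ Even m) := Nat.even_add
    by_cases hK : Even K <;> by_cases hm : Even m <;> simp [hK, hm, h1]
end Lists

open CoxeterSystem List

section Cox
variable {W : Type*} [Group W] {M : CoxeterMatrix (Fin 2)} (cs : CoxeterSystem M W)
local prefix:100 "ℓ" => cs.length
local prefix:100 "π" => cs.wordProd
local prefix:100 "σ" => cs.simple

lemma fin2_cases (i e : Fin 2) : i = e ∨ i = e + 1 := by fin_cases i <;> fin_cases e <;> decide

lemma fin2_add_two (e : Fin 2) : e + 1 + 1 = e := by fin_cases e <;> decide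

lemma fin2_succ_ne (e : Fin 2) : e + 1 ≠ e := by fin_cases e <;> decide

theorem canonical_of_descent : ∀ (n : ℕ) (w : W), cs.length w = n → ∀ e : Fin 2,
    cs.IsRightDescent w e → w = π (alternatingWord (e+1) e n) := by
  intro n
  induction n using Nat.strong_induction_on with
  | _ n ih =>
    intro w hw e he
    have hw1 : w ≠ 1 := by
      intro h; subst h; exact cs.not_isRightDescent_one e he
    have hlen : cs.length (w * σ e) = n - 1 ∧ 1 ≤ n := by
      have := he
      unfold CoxeterSystem.IsRightDescent at this
      rcases cs.length_mul_simple w e with h | h <;> omega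
    set w' := w * σ e with hw'
    have hwr : w = w' * σ e := by rw [hw']; rw [cs.simple_mul_simple_cancel_right]
    by_cases hw'1 : w' = 1
    · have hn1 : n = 1 := by
        have := cs.length_eq_zero_iff.mpr hw'1
        omega
      subst hn1
      rw [hwr, hw'1, one_mul]
      have : alternatingWord (e+1) e 1 = [e] := by simp [alternatingWord]
      rw [this, cs.wordProd_singleton]
    · obtain ⟨f, hf⟩ := cs.exists_rightDescent_of_ne_one hw'1
      have hfe : f ≠ e := by
        intro h; subst h
        unfold CoxeterSystem.IsRightDescent at hf
        rw [← hwr] at hf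
        omega
      have hfe' : f = e + 1 := by
        rcases fin2_cases f e with h | h
        · exact absurd h hfe
        · exact h
      have hrec := ih (n-1) (by omega) w' hlen.1 f hf
      rw [hfe', fin2_add_two] at hrec
      have hn : n - 1 + 1 = n := by omega
      rw [hwr, hrec, ← cs.wordProd_concat, ← alternatingWord_succ, hn]

theorem canonical (w : W) : ∃ e : Fin 2, w = π (alternatingWord (e+1) e (cs.length w)) := by
  by_cases hw : w = 1
  · exact ⟨0, by simp [hw, alternatingWord]⟩
  · obtain ⟨e, he⟩ := cs.exists_rightDescent_of_ne_one hw
    exact ⟨e, canonical_of_descent cs (cs.length w) w rfl e he⟩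
end Cox

open CoxeterSystem List

section Refl
variable {B : Type*} {W : Type*} [Group W] {M : CoxeterMatrix B} (cs : CoxeterSystem M W)
local prefix:100 "π" => cs.wordProd
local prefix:100 "σ" => cs.simple

private lemma pow_semi (u v : W) : ∀ k : ℕ, (u*v)^k * u = u * (v*u)^k := by
  intro k
  induction k with
  | zero => simp
  | succ k ih =>
    rw [pow_succ', mul_assoc, ih, pow_succ', ← mul_assoc, ← mul_assoc, mul_assoc u v u]

private lemma refl_aux (i i' : B) : ∀ k : ℕ,
    cs.IsReflection (σ i' * (σ i * σ i')^k) ∧ cs.IsReflection (σ i * (σ i' * σ i)^k) := by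
  intro k
  induction k with
  | zero => simpa using ⟨cs.isReflection_simple i', cs.isReflection_simple i⟩
  | succ k ih =>
    constructor
    · have := (ih.2).conj (σ i')
      have heq : σ i' * (σ i * (σ i' * σ i)^k) * (σ i')⁻¹ = σ i' * (σ i * σ i')^(k+1) := by
        rw [cs.inv_simple, pow_succ']
        calc σ i' * (σ i * (σ i' * σ i) ^ k) * σ i'
            = σ i' * (σ i * ((σ i' * σ i) ^ k * σ i')) := by group
          _ = σ i' * (σ i * (σ i' * (σ i * σ i')^k)) := by rw [pow_semi]
          _ = σ i' * (σ i * σ i' * (σ i * σ i')^k) := by group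
      rwa [heq] at this
    · have := (ih.1).conj (σ i)
      have heq : σ i * (σ i' * (σ i * σ i')^k) * (σ i)⁻¹ = σ i * (σ i' * σ i)^(k+1) := by
        rw [cs.inv_simple, pow_succ']
        calc σ i * (σ i' * (σ i * σ i') ^ k) * σ i
            = σ i * (σ i' * ((σ i * σ i') ^ k * σ i)) := by group
          _ = σ i * (σ i' * (σ i * (σ i' * σ i)^k)) := by rw [pow_semi]
          _ = σ i * (σ i' * σ i * (σ i' * σ i)^k) := by group
      rwa [heq] at this

theorem isReflection_alt (i i' : B) (k : ℕ) :
    cs.IsReflection (π (alternatingWord i i' (2*k+1))) := by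
  rw [cs.prod_alternatingWord_eq_mul_pow]
  have h1 : ¬ Even (2*k+1) := by simp [Nat.even_add_one, Nat.even_mul]
  have h2 : (2*k+1)/2 = k := by omega
  rw [h2, if_neg h1]
  exact (refl_aux cs i i' k).1
end Refl

theorem isReflection_of_odd_length {W : Type*} [Group W] {M : CoxeterMatrix (Fin 2)}
    (cs : CoxeterSystem M W) {w : W} (hw : cs.length w % 2 = 1) : cs.IsReflection w := by
  obtain ⟨e, he⟩ := canonical cs w
  obtain ⟨k, hk⟩ : ∃ k, cs.length w = 2*k+1 := ⟨cs.length w / 2, by omega⟩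
  rw [hk] at he
  rw [he]
  exact isReflection_alt cs (e+1) e k

open DihedralGroup

section Circ
variable (p : ℕ)

private lemma circ_ex (k : ZMod p) : ∃ n : ℕ, ((n : ZMod p) = k ∨ (n : ZMod p) = -k) := by
  cases p with
  | zero =>
    rcases Int.natAbs_eq k with h | h
    · exact ⟨k.natAbs, Or.inl h.symm⟩
    · refine ⟨k.natAbs, Or.inr ?_⟩
      show (k.natAbs : ℤ) = -k
      exact (neg_eq_iff_eq_neg.mpr h).symm
  | succ q => exact ⟨k.val, Or.inl ((ZMod.natCast_val k).trans (ZMod.cast_id _ _))⟩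

noncomputable def circ (k : ZMod p) : ℕ := Nat.find (circ_ex p k)

lemma circ_spec (k : ZMod p) :
    ((circ p k : ZMod p) = k ∨ ((circ p k : ZMod p)) = -k) := Nat.find_spec (circ_ex p k)

lemma circ_le (k : ZMod p) (n : ℕ) (h : (n:ZMod p) = k ∨ (n:ZMod p) = -k) : circ p k ≤ n :=
  Nat.find_le h

lemma circ_zero : circ p 0 = 0 := Nat.le_zero.mp (circ_le p 0 0 (Or.inl (by simp)))

lemma circ_neg (k : ZMod p) : circ p (-k) = circ p k := by
  apply _root_.le_antisymm
  · rcases circ_spec p k with h | h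
    · exact circ_le p (-k) _ (Or.inr (by rw [neg_neg, h]))
    · exact circ_le p (-k) _ (Or.inl (by rw [h]))
  · rcases circ_spec p (-k) with h | h
    · exact circ_le p k _ (Or.inr (by rw [h]))
    · exact circ_le p k _ (Or.inl (by rw [h, neg_neg]))

lemma circ_add_one (k : ZMod p) : circ p (k+1) ≤ circ p k + 1 := by
  rcases circ_spec p k with h | h
  · exact circ_le p (k+1) (circ p k + 1) (Or.inl (by push_cast; rw [h]))
  · rcases Nat.eq_zero_or_pos (circ p k) with h0 | h0
    · have hk : k = 0 := by rw [h0] at h; simpa using h.symm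
      rw [hk, zero_add]
      exact le_trans (circ_le p 1 1 (Or.inl (by push_cast; ring))) (by omega)
    · have h1 : circ p (k+1) ≤ circ p k - 1 := by
        apply circ_le p (k+1) (circ p k - 1)
        right
        have h2 : ((circ p k - 1 : ℕ) : ZMod p) = (circ p k : ZMod p) - 1 := by
          push_cast [Nat.cast_sub h0]; ring
        rw [h2, h]; ring
      omega

lemma circ_sub_one (k : ZMod p) : circ p (k-1) ≤ circ p k + 1 := by
  have h := circ_add_one p (-k)
  rw [← circ_neg p (k-1), neg_sub, sub_eq_add_neg, add_comm, ← circ_neg p k]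
  exact h

private lemma dvd_of_cast_eq {a b : ℕ} (h : (a : ZMod p) = b) : (p:ℤ) ∣ ((a:ℤ) - b) := by
  apply (ZMod.intCast_zmod_eq_zero_iff_dvd _ _).mp
  push_cast
  rw [h]; ring

private lemma dvd_of_cast_eq_neg {a b : ℕ} (h : (a : ZMod p) = -(b:ZMod p)) :
    (p:ℤ) ∣ ((a:ℤ) + b) := by
  apply (ZMod.intCast_zmod_eq_zero_iff_dvd _ _).mp
  push_cast
  rw [h]; ring

lemma circ_coe_bound (n : ℕ) :
    (p ≠ 0 → n ≤ p → min n (p - n) ≤ circ p (n : ZMod p)) ∧ (p = 0 → n ≤ circ p (n : ZMod p)) := by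
  obtain ⟨c, hc⟩ : ∃ c, circ p (n : ZMod p) = c := ⟨_, rfl⟩
  rw [hc]
  have key : (p:ℤ) ∣ ((c:ℤ) - n) ∨ (p:ℤ) ∣ ((c:ℤ) + n) := by
    rcases circ_spec p (n : ZMod p) with h | h
    · exact Or.inl (dvd_of_cast_eq p (by rw [hc] at h; exact h))
    · exact Or.inr (dvd_of_cast_eq_neg p (by rw [hc] at h; exact h))
  rcases key with hd | hd
  · rcases eq_or_ne ((c:ℤ) - n) 0 with h0 | h0
    · constructor <;> intros <;> omega
    · have h4 : (p:ℤ) ≤ (c:ℤ) - n ∨ (p:ℤ) ≤ (n:ℤ) - c := by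
        rcases h0.lt_or_gt with hlt | hlt
        · right
          have := Int.le_of_dvd (by omega) ((dvd_neg).mpr hd)
          omega
        · left
          exact Int.le_of_dvd (by omega) hd
      constructor
      · intro hp hnp; rcases h4 with h4 | h4 <;> omega
      · intro hp; subst hp
        have h5 : (c:ℤ) - n = 0 := by
          have := hd; rwa [Nat.cast_zero, zero_dvd_iff] at this
        omega
  · rcases eq_or_ne ((c:ℤ) + n) 0 with h0 | h0
    · constructor <;> intros <;> omega
    · have h4 : (p:ℤ) ≤ (c:ℤ) + n := Int.le_of_dvd (by omega) hd
      constructor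
      · intro hp hnp; omega
      · intro hp; subst hp
        have h5 : (c:ℤ) + n = 0 := by
          have := hd; rwa [Nat.cast_zero, zero_dvd_iff] at this
        omega

end Circ

section Nrm
open DihedralGroup
variable (p : ℕ)

noncomputable def nrm : DihedralGroup p → ℕ
  | DihedralGroup.r k => 2 * circ p k
  | DihedralGroup.sr k => min (2 * circ p k + 1) (2 * circ p (k - 1) + 1)

@[simp] lemma nrm_r (k : ZMod p) : nrm p (DihedralGroup.r k) = 2 * circ p k := rfl
@[simp] lemma nrm_sr (k : ZMod p) :
    nrm p (DihedralGroup.sr k) = min (2 * circ p k + 1) (2 * circ p (k - 1) + 1) := rfl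

lemma nrm_one : nrm p 1 = 0 := by rw [one_def, nrm_r, circ_zero]

lemma r_pow (a : ZMod p) (k : ℕ) : (DihedralGroup.r a)^k = DihedralGroup.r ((k : ZMod p) * a) := by
  induction k with
  | zero => simp [one_def, -r_zero]
  | succ k ih => rw [pow_succ, ih, r_mul_r]; congr 1; push_cast; ring

lemma inv_r (a : ZMod p) : (DihedralGroup.r a)⁻¹ = DihedralGroup.r (-a) := by
  apply inv_eq_of_mul_eq_one_right; simp [one_def, -r_zero]

lemma inv_sr (a : ZMod p) : (DihedralGroup.sr a)⁻¹ = DihedralGroup.sr a := by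
  apply inv_eq_of_mul_eq_one_right; simp [one_def, -r_zero]

lemma nrm_mul_le (g : DihedralGroup p) (c : ZMod p) (hc : c = 0 ∨ c = 1) :
    nrm p (g * DihedralGroup.sr c) ≤ nrm p g + 1 := by
  have hadd : ∀ k : ZMod p, circ p k ≤ circ p (k - 1) + 1 := by
    intro k
    have := circ_add_one p (k-1); rwa [sub_add_cancel] at this
  have hsub := circ_sub_one p
  rcases g with k | k <;> rcases hc with rfl | rfl <;>
    simp only [r_mul_sr, sr_mul_sr, nrm_r, nrm_sr]
  · rw [zero_sub]
    have h1 : circ p (-k) = circ p k := circ_neg p k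
    have h2 : circ p (-k - 1) ≥ 0 := Nat.zero_le _
    omega
  · have h1 : circ p (1 - k - 1) = circ p k := by rw [show (1:ZMod p) - k - 1 = -k by ring, circ_neg]
    omega
  · rw [zero_sub]
    have h1 : circ p (-k) = circ p k := circ_neg p k
    have h2 := hadd k
    omega
  · have h1 : circ p (1 - k) = circ p (k - 1) := by rw [show (1:ZMod p) - k = -(k-1) by ring, circ_neg]
    have h2 := hsub k
    omega
end Nrm

section CoxModel
open CoxeterSystem List
variable {W : Type*} [Group W] {M : CoxeterMatrix (Fin 2)} (cs : CoxeterSystem M W)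

lemma fin2_cases' (i e : Fin 2) : i = e ∨ i = e + 1 := by fin_cases i <;> fin_cases e <;> decide
lemma fin2_add_two' (e : Fin 2) : e + 1 + 1 = e := by fin_cases e <;> decide
lemma fin2_succ_ne' (e : Fin 2) : e + 1 ≠ e := by fin_cases e <;> decide

def fg (p : ℕ) (e : Fin 2) : Fin 2 → DihedralGroup p :=
  fun j => if j = e then DihedralGroup.sr 0 else DihedralGroup.sr 1

lemma fg_liftable (e : Fin 2) : M.IsLiftable (fg (M e (e+1)) e) := by
  intro i i'
  have hne := fin2_succ_ne' e
  rcases fin2_cases' i e with h | h <;> rcases fin2_cases' i' e with h' | h' <;>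
    rw [h, h'] <;> simp only [fg, if_pos rfl, if_neg hne, if_true]
  · rw [M.diagonal, pow_one, DihedralGroup.sr_mul_sr]
    simp [DihedralGroup.one_def, -DihedralGroup.r_zero]
  · rw [DihedralGroup.sr_mul_sr, _root_.r_pow]
    simp [DihedralGroup.one_def, -DihedralGroup.r_zero]
  · rw [DihedralGroup.sr_mul_sr, M.symmetric, _root_.r_pow]
    simp [DihedralGroup.one_def, -DihedralGroup.r_zero]
  · rw [M.diagonal, pow_one, DihedralGroup.sr_mul_sr]
    simp [DihedralGroup.one_def, -DihedralGroup.r_zero]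

noncomputable def phi (e : Fin 2) : W →* DihedralGroup (M e (e+1)) :=
  cs.lift ⟨fg (M e (e+1)) e, fg_liftable e⟩

lemma phi_simple (e i : Fin 2) : phi cs e (cs.simple i) = fg (M e (e+1)) e i :=
  cs.lift_apply_simple (fg_liftable e) i

lemma nrm_phi_le (e : Fin 2) (w : W) : nrm (M e (e+1)) (phi cs e w) ≤ cs.length w := by
  obtain ⟨ω, hlen, hw⟩ := cs.exists_reduced_word w
  rw [hw]; replace hlen : ω.length = cs.length (cs.wordProd ω) := hlen.eq.symm
  rw [← hlen]
  clear hw hlen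
  induction ω using List.reverseRecOn with
  | nil => simp [nrm_one]
  | append_singleton ω i ih =>
    rw [cs.wordProd_append, map_mul, cs.wordProd_singleton, phi_simple]
    have hc : fg (M e (e+1)) e i = DihedralGroup.sr 0 ∨ fg (M e (e+1)) e i = DihedralGroup.sr 1 := by
      rw [fg]; split <;> simp
    rcases hc with h | h <;> rw [h] <;>
      calc nrm (M e (e+1)) (phi cs e (cs.wordProd ω) * _) ≤ nrm (M e (e+1)) (phi cs e (cs.wordProd ω)) + 1 :=
            nrm_mul_le _ _ _ (by simp)
        _ ≤ ω.length + 1 := by omega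
        _ = (ω ++ [i]).length := by simp
end CoxModel

section PhiAlt
open CoxeterSystem List
variable {W : Type*} [Group W] {M : CoxeterMatrix (Fin 2)} (cs : CoxeterSystem M W)

lemma phi_alt (e : Fin 2) (i i' : Fin 2) (N : ℕ) :
    phi cs e (cs.wordProd (alternatingWord i i' N)) =
      (if Even N then 1 else fg (M e (e+1)) e i') *
        (fg (M e (e+1)) e i * fg (M e (e+1)) e i')^(N/2) := by
  rw [cs.prod_alternatingWord_eq_mul_pow, map_mul, map_pow, apply_ite (phi cs e), map_one,
    phi_simple, map_mul, phi_simple, phi_simple]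

lemma phi_u (e : Fin 2) (N : ℕ) :
    phi cs e (cs.wordProd (alternatingWord (e+1) e N)) =
      if Even N then DihedralGroup.r (-((N/2 : ℕ) : ZMod (M e (e+1))))
      else DihedralGroup.sr (-((N/2 : ℕ) : ZMod (M e (e+1)))) := by
  rw [phi_alt]
  have h0 : fg (M e (e+1)) e e = DihedralGroup.sr 0 := if_pos rfl
  have h1 : fg (M e (e+1)) e (e+1) = DihedralGroup.sr 1 := if_neg (fin2_succ_ne' e)
  rw [h0, h1, DihedralGroup.sr_mul_sr, _root_.r_pow]
  split
  · rw [one_mul]; congr 1; push_cast; ring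
  · rw [DihedralGroup.sr_mul_r]; congr 1; push_cast; ring

lemma phi_v (e : Fin 2) (N : ℕ) :
    phi cs e (cs.wordProd (alternatingWord e (e+1) N)) =
      if Even N then DihedralGroup.r (((N/2 : ℕ) : ZMod (M e (e+1))))
      else DihedralGroup.sr (1 + ((N/2 : ℕ) : ZMod (M e (e+1)))) := by
  rw [phi_alt]
  have h0 : fg (M e (e+1)) e e = DihedralGroup.sr 0 := if_pos rfl
  have h1 : fg (M e (e+1)) e (e+1) = DihedralGroup.sr 1 := if_neg (fin2_succ_ne' e)
  rw [h0, h1, DihedralGroup.sr_mul_sr, _root_.r_pow]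
  split
  · rw [one_mul]; congr 1; push_cast; ring
  · rw [DihedralGroup.sr_mul_r]; congr 1; push_cast; ring

theorem master (e : Fin 2) (L m : ℕ)
    (hL : L ≤ M e (e+1) ∨ M e (e+1) = 0) (hm : m ≤ M e (e+1) ∨ M e (e+1) = 0) :
    L + m ≤ cs.length (cs.wordProd (alternatingWord (e+1) e L) *
        (cs.wordProd (alternatingWord e (e+1) m))⁻¹) ∨
    (M e (e+1) ≠ 0 ∧ 2 * M e (e+1) ≤ cs.length (cs.wordProd (alternatingWord (e+1) e L) *
        (cs.wordProd (alternatingWord e (e+1) m))⁻¹) + (L + m)) := by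
  have hle := nrm_phi_le cs e (cs.wordProd (alternatingWord (e+1) e L) *
      (cs.wordProd (alternatingWord e (e+1) m))⁻¹)
  rw [map_mul, map_inv, phi_u, phi_v] at hle
  set p := M e (e+1) with hp
  set lhs := cs.length (cs.wordProd (alternatingWord (e+1) e L) *
      (cs.wordProd (alternatingWord e (e+1) m))⁻¹) with hlhs
  rcases Nat.even_or_odd L with hL2 | hL2 <;> rcases Nat.even_or_odd m with hm2 | hm2
  · -- even, even
    obtain ⟨c, rfl⟩ := hL2
    obtain ⟨d, rfl⟩ := hm2
    rw [if_pos (by exact ⟨c, rfl⟩), if_pos (by exact ⟨d, rfl⟩), _root_.inv_r, DihedralGroup.r_mul_r] at hle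
    have harg : (-(((c+c)/2 : ℕ) : ZMod p)) + -(((d+d)/2 : ℕ) : ZMod p)
        = -(((c+d : ℕ)) : ZMod p) := by
      push_cast
      rw [show (c+c)/2 = c by omega, show (d+d)/2 = d by omega]
      push_cast; ring
    rw [harg, nrm_r, circ_neg] at hle
    have hb := circ_coe_bound p (c + d)
    rcases eq_or_ne p 0 with hp0 | hp0
    · have := hb.2 hp0; left; omega
    · have hcd : c + d ≤ p := by omega
      have := hb.1 hp0 hcd
      omega
  · -- even, odd
    obtain ⟨c, rfl⟩ := hL2
    obtain ⟨d, hd⟩ := hm2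
    subst hd
    rw [if_pos (by exact ⟨c, rfl⟩), if_neg (by simp [Nat.even_add_one, parity_simps]),
      _root_.inv_sr, DihedralGroup.r_mul_sr] at hle
    have harg : (1 + (((2*d+1)/2 : ℕ) : ZMod p)) - (-(((c+c)/2 : ℕ) : ZMod p))
        = (((c+d+1 : ℕ)) : ZMod p) := by
      rw [show (c+c)/2 = c by omega, show (2*d+1)/2 = d by omega]
      push_cast; ring
    have harg2 : (((c+d+1 : ℕ)) : ZMod p) - 1 = (((c+d : ℕ)) : ZMod p) := by
      push_cast; ring
    rw [harg, nrm_sr, harg2] at hle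
    have hb1 := circ_coe_bound p (c + d + 1)
    have hb2 := circ_coe_bound p (c + d)
    rcases eq_or_ne p 0 with hp0 | hp0
    · have h1 := hb1.2 hp0; have h2 := hb2.2 hp0; left; omega
    · have hcd1 : c + d + 1 ≤ p := by omega
      have h1 := hb1.1 hp0 hcd1
      have h2 := hb2.1 hp0 (by omega)
      omega
  · -- odd, even
    obtain ⟨c, hc⟩ := hL2
    subst hc
    obtain ⟨d, rfl⟩ := hm2
    rw [if_neg (by simp [Nat.even_add_one, parity_simps]), if_pos (by exact ⟨d, rfl⟩),
      _root_.inv_r, DihedralGroup.sr_mul_r] at hle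
    have harg : (-(((2*c+1)/2 : ℕ) : ZMod p)) + (-(((d+d)/2 : ℕ) : ZMod p))
        = -(((c+d : ℕ)) : ZMod p) := by
      rw [show (d+d)/2 = d by omega, show (2*c+1)/2 = c by omega]
      push_cast; ring
    have harg2 : -(((c+d : ℕ)) : ZMod p) - 1 = -(((c+d+1 : ℕ)) : ZMod p) := by
      push_cast; ring
    rw [harg, nrm_sr, harg2, circ_neg, circ_neg] at hle
    have hb1 := circ_coe_bound p (c + d + 1)
    have hb2 := circ_coe_bound p (c + d)
    rcases eq_or_ne p 0 with hp0 | hp0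
    · have h1 := hb1.2 hp0; have h2 := hb2.2 hp0; left; omega
    · have h1 := hb1.1 hp0 (by omega)
      have h2 := hb2.1 hp0 (by omega)
      omega
  · -- odd, odd
    obtain ⟨c, hc⟩ := hL2
    subst hc
    obtain ⟨d, hd⟩ := hm2
    subst hd
    rw [if_neg (by simp [Nat.even_add_one, parity_simps]),
      if_neg (by simp [Nat.even_add_one, parity_simps]),
      _root_.inv_sr, DihedralGroup.sr_mul_sr] at hle
    have harg : (1 + (((2*d+1)/2 : ℕ) : ZMod p)) - (-(((2*c+1)/2 : ℕ) : ZMod p))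
        = (((c+d+1 : ℕ)) : ZMod p) := by
      rw [show (2*c+1)/2 = c by omega, show (2*d+1)/2 = d by omega]
      push_cast; ring
    rw [harg, nrm_r] at hle
    have hb1 := circ_coe_bound p (c + d + 1)
    rcases eq_or_ne p 0 with hp0 | hp0
    · have h1 := hb1.2 hp0; left; omega
    · have h1 := hb1.1 hp0 (by omega)
      omega
end PhiAlt

end Stmt12Aux

/-- in a dihedral Coxeter system (`|S| = 2`), if `ℓ(t x) > ℓ(x) + 1`
for a reflection `t`, then there is a chain `x < t₁ x < t₂ t₁ x < ⋯ < t_n ⋯ t₁ x = t x`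
with each `tᵢ` a reflection of length smaller than `ℓ(t)`. -/
theorem stmt_12 {W : Type*} [Group W] {M : CoxeterMatrix (Fin 2)}
    (cs : CoxeterSystem M W) (x t : W) (ht : cs.IsReflection t)
    (h : cs.length x + 1 < cs.length (t * x)) :
    ∃ (n : ℕ) (y : ℕ → W), 0 < n ∧ y 0 = x ∧ y n = t * x ∧
      ∀ i < n, cs.IsReflection (y (i + 1) * (y i)⁻¹) ∧
        cs.length (y (i + 1) * (y i)⁻¹) < cs.length t ∧
        cs.length (y i) < cs.length (y (i + 1)) := by
  classical
  obtain ⟨e, hA⟩ := canonical cs (t * x)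
  set L := cs.length (t * x) with hLdef
  set m := cs.length x with hmdef
  have hmL : m + 2 ≤ L := by omega
  have hredA : cs.IsReduced (alternatingWord (e+1) e L) := by
    unfold CoxeterSystem.IsReduced
    rw [← hA, CoxeterSystem.length_alternatingWord]
  have hu_len : ∀ j, j ≤ L → cs.length (cs.wordProd (alternatingWord (e+1) e j)) = j := by
    intro j hj
    have h1 := hredA.drop (L - j)
    rw [alt_drop (e+1) e L j hj] at h1
    unfold CoxeterSystem.IsReduced at h1
    rw [h1, CoxeterSystem.length_alternatingWord]
  have ht2 : 2 ≤ cs.length t := by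
    have h1 := cs.length_mul_le t x
    omega
  by_cases hx : x = cs.wordProd (alternatingWord (e+1) e m)
  · -- CASE A : x lies on the canonical ladder of t*x; all steps simple
    refine ⟨L - m, fun i => cs.wordProd (alternatingWord (e+1) e (m+i)), by omega, ?_, ?_, ?_⟩
    · simpa using hx.symm
    · dsimp only
      rw [show m + (L - m) = L by omega, ← hA]
    · intro i hi
      dsimp only
      have e1 : cs.wordProd (alternatingWord (e+1) e (m+(i+1))) =
          cs.simple (if Even (m+i) then e else e+1) *
            cs.wordProd (alternatingWord (e+1) e (m+i)) := by
        rw [show m+(i+1) = (m+i)+1 by omega, CoxeterSystem.alternatingWord_succ',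
          cs.wordProd_cons]
      refine ⟨?_, ?_, ?_⟩
      · rw [e1, mul_inv_cancel_right]; exact cs.isReflection_simple _
      · rw [e1, mul_inv_cancel_right, cs.length_simple]; omega
      · rw [hu_len (m+i) (by omega), hu_len (m+(i+1)) (by omega)]; omega
  · -- CASE B
    obtain ⟨f, hxf⟩ := canonical cs x
    rw [← hmdef] at hxf
    have hf : f = e + 1 := by
      rcases fin2_cases f e with h' | h'
      · exact absurd (h' ▸ hxf) hx
      · exact h'
    rw [hf, fin2_add_two] at hxf
    have hredX : cs.IsReduced (alternatingWord e (e+1) m) := by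
      unfold CoxeterSystem.IsReduced
      rw [← hxf, CoxeterSystem.length_alternatingWord]
    have hLbound : L ≤ M e (e+1) ∨ M e (e+1) = 0 := by
      rcases eq_or_ne (M e (e+1)) 0 with h0 | h0
      · right; exact h0
      · left
        by_contra hgt
        exact cs.not_isReduced_alternatingWord (e+1) e
          (by rw [M.symmetric (e+1) e]; exact h0) (by rw [M.symmetric (e+1) e]; omega) hredA
    have hmbound : m ≤ M e (e+1) ∨ M e (e+1) = 0 := by
      rcases eq_or_ne (M e (e+1)) 0 with h0 | h0
      · right; exact h0
      · left
        by_contra hgt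
        exact cs.not_isReduced_alternatingWord e (e+1) h0 (by omega) hredX
    have hteq : t = cs.wordProd (alternatingWord (e+1) e L) *
        (cs.wordProd (alternatingWord e (e+1) m))⁻¹ := by
      rw [← hA, ← hxf, mul_inv_cancel_right]
    have hmaster := master cs e L m hLbound hmbound
    rw [← hteq] at hmaster
    by_cases hcmp : 2*m+1 < cs.length t
    · -- u-chain : jump onto the canonical ladder of t*x, then simple steps
      refine ⟨L - m, fun i => if i = 0 then x
          else cs.wordProd (alternatingWord (e+1) e (m+i)), by omega, by simp, ?_, ?_⟩
      · dsimp only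
        rw [if_neg (by omega), show m + (L - m) = L by omega, ← hA]
      · intro i hi
        dsimp only
        rcases Nat.eq_zero_or_pos i with rfl | hipos
        · simp only [if_neg one_ne_zero, reduceIte, zero_add]
          have hlen1 : cs.length (cs.wordProd (alternatingWord (e+1) e (m+1))) = m + 1 :=
            hu_len (m+1) (by omega)
          refine ⟨?_, ?_, ?_⟩
          · apply isReflection_of_odd_length cs
            rw [cs.length_mul_mod_two, cs.length_inv, hlen1, ← hmdef]
            omega
          · have hb := cs.length_mul_le (cs.wordProd (alternatingWord (e+1) e (m+1))) x⁻¹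
            rw [cs.length_inv, hlen1, ← hmdef] at hb
            omega
          · rw [hlen1]; omega
        · rw [if_neg (by omega), if_neg (by omega)]
          have e1 : cs.wordProd (alternatingWord (e+1) e (m+(i+1))) =
              cs.simple (if Even (m+i) then e else e+1) *
                cs.wordProd (alternatingWord (e+1) e (m+i)) := by
            rw [show m+(i+1) = (m+i)+1 by omega, CoxeterSystem.alternatingWord_succ',
              cs.wordProd_cons]
          refine ⟨?_, ?_, ?_⟩
          · rw [e1, mul_inv_cancel_right]; exact cs.isReflection_simple _
          · rw [e1, mul_inv_cancel_right, cs.length_simple]; omega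
          · rw [hu_len (m+i) (by omega), hu_len (m+(i+1)) (by omega)]; omega
    · -- v-chain : climb the ladder of x, then jump to t*x
      have hmain : M e (e+1) ≠ 0 ∧ 2 * M e (e+1) ≤ cs.length t + (L + m) := by
        rcases hmaster with h1 | h1
        · exfalso; omega
        · exact h1
      have hp0 := hmain.1
      have hpL : L ≤ M e (e+1) := by rcases hLbound with h1 | h1; exact h1; exact absurd h1 hp0
      have hvlen : ∀ j, j ≤ M e (e+1) →
          cs.length (cs.wordProd (alternatingWord e (e+1) j)) = j := by
        intro j hj
        have hub : cs.length (cs.wordProd (alternatingWord e (e+1) j)) ≤ j := by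
          refine le_trans (cs.length_wordProd_le _) ?_
          rw [CoxeterSystem.length_alternatingWord]
        have hmm := master cs (e+1) j 0
          (by rw [fin2_add_two, M.symmetric (e+1) e]; left; exact hj)
          (by rw [fin2_add_two, M.symmetric (e+1) e]; left; omega)
        rw [fin2_add_two] at hmm
        have hzero : cs.wordProd (alternatingWord (e+1) e 0) = 1 := by
          show cs.wordProd [] = 1
          exact cs.wordProd_nil
        rw [hzero, inv_one, mul_one, M.symmetric (e+1) e] at hmm
        rcases hmm with h1 | h1
        · omega
        · omega
      refine ⟨L - m, fun i => if i = L - m then t * x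
          else cs.wordProd (alternatingWord e (e+1) (m+i)), by omega, ?_, by simp, ?_⟩
      · dsimp only
        rw [if_neg (by omega)]
        simpa using hxf.symm
      · intro i hi
        dsimp only
        by_cases hlast : i + 1 = L - m
        · have hmi : m + i = L - 1 := by omega
          rw [if_pos hlast, if_neg (by omega), hmi]
          have hvl : cs.length (cs.wordProd (alternatingWord e (e+1) (L-1))) = L - 1 :=
            hvlen (L-1) (by omega)
          refine ⟨?_, ?_, ?_⟩
          · apply isReflection_of_odd_length cs
            rw [cs.length_mul_mod_two, cs.length_inv, hvl, ← hLdef]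
            omega
          · -- the jump reflection is short : it is a product of 2p-2L+1 letters
            have hbraid : cs.wordProd (alternatingWord (e+1) e L) =
                cs.wordProd (alternatingWord e (e+1) (M (e+1) e * 2 - L)) :=
              cs.prod_alternatingWord_eq_prod_alternatingWord_sub (e+1) e L
                (by rw [M.symmetric (e+1) e]; omega)
            rw [M.symmetric (e+1) e] at hbraid
            have hsplitlen : M e (e+1) * 2 - L = (2 * M e (e+1) - 2*L + 1) + (L - 1) := by
              omega
            have hsplit : alternatingWord e (e+1) (M e (e+1) * 2 - L) =
                alternatingWord (if Even (L-1) then e else e+1)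
                  (if Even (L-1) then e+1 else e) (2 * M e (e+1) - 2*L + 1)
                  ++ alternatingWord e (e+1) (L-1) := by
              rw [hsplitlen, alt_append]
            have hjump : (t * x) * (cs.wordProd (alternatingWord e (e+1) (L-1)))⁻¹ =
                cs.wordProd (alternatingWord (if Even (L-1) then e else e+1)
                  (if Even (L-1) then e+1 else e) (2 * M e (e+1) - 2*L + 1)) := by
              rw [hA, hbraid, hsplit, cs.wordProd_append, mul_inv_cancel_right]
            rw [hjump]
            have hshort : cs.length (cs.wordProd (alternatingWord
                (if Even (L-1) then e else e+1) (if Even (L-1) then e+1 else e)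
                (2 * M e (e+1) - 2*L + 1))) ≤ 2 * M e (e+1) - 2*L + 1 := by
              refine le_trans (cs.length_wordProd_le _) ?_
              rw [CoxeterSystem.length_alternatingWord]
            have hmain2 := hmain.2
            omega
          · rw [hvl, ← hLdef]; omega
        · rw [if_neg hlast, if_neg (by omega)]
          have e1 : cs.wordProd (alternatingWord e (e+1) (m+(i+1))) =
              cs.simple (if Even (m+i) then e+1 else e) *
                cs.wordProd (alternatingWord e (e+1) (m+i)) := by
            rw [show m+(i+1) = (m+i)+1 by omega, CoxeterSystem.alternatingWord_succ',
              cs.wordProd_cons]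
          refine ⟨?_, ?_, ?_⟩
          · rw [e1, mul_inv_cancel_right]; exact cs.isReflection_simple _
          · rw [e1, mul_inv_cancel_right, cs.length_simple]; omega
          · rw [hvlen (m+i) (by omega), hvlen (m+(i+1)) (by omega)]; omega
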